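/- For every integer k ≥ 1, the identity ∑_{s=1}^{k} ∏_{1≤i≤k, i≠s} (x_i − x_s + 1)/(x_i − x_s) = k holds in the field ℚ(x_1,…,x_k). -/
import Mathlib


/-- The variable `x_i` viewed inside the fraction field `ℚ(x_1, …, x_k)`. -/
noncomputable def Xv (k : ℕ) (i : Fin k) : FractionRing (MvPolynomial (Fin k) ℚ) :=
  algebraMap (MvPolynomial (Fin k) ℚ) (FractionRing (MvPolynomial (Fin k) ℚ)) (MvPolynomial.X i)

section Aux

open Polynomial Finset

variable {F : Type*} [Field F]

lemma aux_leadingCoeff_basis {ι : Type*} [DecidableEq ι] (s : Finset ι) (v : ι → F) (i : ι) :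
    (Lagrange.basis s v i).leadingCoeff = ∏ j ∈ s.erase i, (v i - v j)⁻¹ := by
  rw [Lagrange.basis, leadingCoeff_prod]
  refine Finset.prod_congr rfl fun j _ => ?_
  rw [Lagrange.basisDivisor]
  rcases eq_or_ne (v i) (v j) with h | h
  · simp [h]
  · rw [leadingCoeff_mul, leadingCoeff_C, leadingCoeff_X_sub_C, mul_one]

/-- Key divided-difference identity over any field: for distinct nodes `a s`,
`∑ s, ∏_{i ≠ s} (a s - a i - 1) / (a s - a i) = k`. -/
lemma aux_key {k : ℕ} (hk : 1 ≤ k) (a : Fin k → F) (ha : Function.Injective a) :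
    ∑ s : Fin k, ∏ i ∈ Finset.univ.erase s, ((a s - a i - 1) / (a s - a i)) = (k : F) := by
  classical
  have hinj : Set.InjOn a (Finset.univ : Finset (Fin k)) := fun x _ y _ h => ha h
  set g : F[X] := ∏ i : Fin k, (X - C (a i + 1)) with hg
  set N : F[X] := ∏ i : Fin k, (X - C (a i)) with hN
  have hgm : g.Monic := monic_prod_of_monic _ _ fun i _ => monic_X_sub_C _
  have hNm : N.Monic := monic_prod_of_monic _ _ fun i _ => monic_X_sub_C _
  have hgd : g.natDegree = k := by
    rw [hg, natDegree_prod_of_monic _ _ (fun i _ => monic_X_sub_C (a i + 1))]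
    simp only [natDegree_X_sub_C, Finset.sum_const, Finset.card_univ, Fintype.card_fin,
      smul_eq_mul, mul_one]
  have hNd : N.natDegree = k := by
    rw [hN, natDegree_prod_of_monic _ _ (fun i _ => monic_X_sub_C (a i))]
    simp only [natDegree_X_sub_C, Finset.sum_const, Finset.card_univ, Fintype.card_fin,
      smul_eq_mul, mul_one]
  have hk0 : 0 < k := hk
  -- degree of g - N is < k
  have hdlt : (g - N).degree < (Finset.univ : Finset (Fin k)).card := by
    rcases eq_or_ne g N with h | h
    · rw [h, sub_self, degree_zero]
      exact WithBot.bot_lt_coe _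
    · have := Polynomial.degree_sub_lt (by
        rw [degree_eq_natDegree hgm.ne_zero, degree_eq_natDegree hNm.ne_zero, hgd, hNd])
        hgm.ne_zero (hgm.leadingCoeff.trans hNm.leadingCoeff.symm)
      rw [degree_eq_natDegree hgm.ne_zero, hgd] at this
      simpa using this
  -- g - N interpolates the values of g at the nodes
  have heq : g - N = Lagrange.interpolate Finset.univ a (fun s => g.eval (a s)) := by
    refine Lagrange.eq_interpolate_of_eval_eq _ hinj hdlt fun i _ => ?_
    have : N.eval (a i) = 0 := by
      rw [hN, eval_prod]
      exact Finset.prod_eq_zero (Finset.mem_univ i) (by simp)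
    simp [eval_sub, this]
  -- compare coefficients in degree k - 1
  have hco : (g - N).coeff (k - 1) = -(k : F) := by
    have h1 : g.coeff (k - 1) = -(∑ i : Fin k, (a i + 1)) := by
      have := prod_X_sub_C_nextCoeff (s := (Finset.univ : Finset (Fin k))) (fun i => a i + 1)
      rwa [← hg, nextCoeff_of_natDegree_pos (by rw [hgd]; exact hk0), hgd] at this
    have h2 : N.coeff (k - 1) = -(∑ i : Fin k, a i) := by
      have := prod_X_sub_C_nextCoeff (s := (Finset.univ : Finset (Fin k))) a
      rwa [← hN, nextCoeff_of_natDegree_pos (by rw [hNd]; exact hk0), hNd] at this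
    rw [coeff_sub, h1, h2]
    rw [Finset.sum_add_distrib]
    simp
  have hrhs : (Lagrange.interpolate Finset.univ a (fun s => g.eval (a s))).coeff (k - 1)
      = ∑ s : Fin k, g.eval (a s) * ∏ i ∈ Finset.univ.erase s, (a s - a i)⁻¹ := by
    rw [Lagrange.interpolate_apply, finset_sum_coeff]
    refine Finset.sum_congr rfl fun s _ => ?_
    rw [coeff_C_mul]
    congr 1
    have hdeg : (Lagrange.basis Finset.univ a s).natDegree = k - 1 := by
      simpa using Lagrange.natDegree_basis hinj (Finset.mem_univ s)
    rw [← hdeg, ← Polynomial.leadingCoeff, aux_leadingCoeff_basis]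
  have hmain : ∑ s : Fin k, g.eval (a s) * ∏ i ∈ Finset.univ.erase s, (a s - a i)⁻¹
      = -(k : F) := by rw [← hrhs, ← heq, hco]
  -- compute g.eval (a s)
  have hev : ∀ s : Fin k, g.eval (a s) = -∏ i ∈ Finset.univ.erase s, (a s - a i - 1) := by
    intro s
    rw [hg, eval_prod, ← Finset.mul_prod_erase _ _ (Finset.mem_univ s)]
    simp only [eval_sub, eval_X, eval_C]
    rw [show a s - (a s + 1) = -1 by ring, neg_one_mul]
    congr 1
    exact Finset.prod_congr rfl fun i _ => by ring
  have : ∑ s : Fin k, ∏ i ∈ Finset.univ.erase s, ((a s - a i - 1) / (a s - a i)) = (k : F) := by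
    have := hmain
    simp only [hev, neg_mul] at this
    have h2 : ∑ s : Fin k, (∏ i ∈ Finset.univ.erase s, (a s - a i - 1))
        * ∏ i ∈ Finset.univ.erase s, (a s - a i)⁻¹ = (k : F) := by
      have := congrArg Neg.neg this
      rw [neg_neg, ← Finset.sum_neg_distrib] at this
      simpa using this
    rw [← h2]
    refine Finset.sum_congr rfl fun s _ => ?_
    rw [Finset.prod_div_distrib, div_eq_mul_inv, Finset.prod_inv_distrib]
  exact this

end Aux

/-- for every `k ≥ 1`,
`∑_{s=1}^{k} ∏_{1 ≤ i ≤ k, i ≠ s} (x_i − x_s + 1)/(x_i − x_s) = k` in `ℚ(x_1,…,x_k)`. -/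
theorem stmt_0 (k : ℕ) (hk : 1 ≤ k) :
    ∑ s : Fin k, ∏ i ∈ Finset.univ.erase s,
      (Xv k i - Xv k s + 1) / (Xv k i - Xv k s)
    = (k : FractionRing (MvPolynomial (Fin k) ℚ)) := by
  have hinj : Function.Injective (Xv k) := by
    intro i j h
    exact MvPolynomial.X_injective (IsFractionRing.injective (MvPolynomial (Fin k) ℚ) _ h)
  have := aux_key hk (Xv k) hinj
  rw [← this]
  refine Finset.sum_congr rfl fun s _ => Finset.prod_congr rfl fun i _ => ?_
  rw [show Xv k i - Xv k s + 1 = -(Xv k s - Xv k i - 1) by ring,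
      show Xv k i - Xv k s = -(Xv k s - Xv k i) by ring, neg_div_neg_eq]
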